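/- Any independent set in a graph contains at most one vertex from any clique. Consequently, in the graph G_κ used in the MIS lower bound reduction, if the set-i gadget is a clique on 5 vertices (with one vertex additionally attached to anchor i), any maximal independent set contains at most 1 vertex from set i; and if the set-i gadget is a path on 5 vertices, any maximal independent set contains at least 2 vertices of set i. Therefore the number of MIS vertices in set i (≤1 versus ≥2) determines the bit κ[i]. -/
import Mathlib


open Classical in
/-- **MIS counts in the gadgets of `G_κ` determine the bits of `κ`.**
Let `S` be a maximal independent set of a graph `G`.  Then:
(1) `S` contains at most one vertex of any clique `K`;
(2) if a 5-vertex gadget `w 0, ..., w 4` forms a clique (the case `κ[i] = 1`, with one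
member additionally attached to anchor `i`), then `S` contains at most 1 of its
vertices; and
(3) if the gadget forms a pendant path attached through its endpoint `w 0` to an anchor
`anchor` (the case `κ[i] = 0`), then `S` contains at least 2 of its vertices.
Hence the number of MIS vertices in gadget `i` (`≤ 1` versus `≥ 2`) determines `κ[i]`. -/
theorem mis_gadget_counts_determine_bits {V : Type*} (G : SimpleGraph V) (S : Set V)
    (hindep : ∀ x ∈ S, ∀ y ∈ S, ¬ G.Adj x y)
    (hmaximal : ∀ x ∉ S, ∃ y ∈ S, G.Adj x y) :
    (∀ K : Set V, G.IsClique K → (S ∩ K).Subsingleton) ∧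
    (∀ w : Fin 5 → V, Function.Injective w →
      (∀ i j : Fin 5, i ≠ j → G.Adj (w i) (w j)) →
      (Finset.univ.filter fun i : Fin 5 => w i ∈ S).card ≤ 1) ∧
    (∀ (w : Fin 5 → V) (anchor : V), Function.Injective w → anchor ∉ Set.range w →
      (∀ i : Fin 4, G.Adj (w i.castSucc) (w i.succ)) →
      (∀ i j : Fin 5, i.val + 1 < j.val → ¬ G.Adj (w i) (w j)) →
      (∀ i : Fin 5, i ≠ 0 → ∀ u, G.Adj (w i) u → u ∈ Set.range w) →
      (∀ u, G.Adj (w 0) u → u ∈ Set.range w ∨ u = anchor) →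
      2 ≤ (Finset.univ.filter fun i : Fin 5 => w i ∈ S).card) := by

  refine ⟨?_, ?_, ?_⟩
  · intro K hK x hx y hy
    by_contra hne
    exact hindep x hx.1 y hy.1 (hK hx.2 hy.2 hne)
  · intro w hw hadj
    apply Finset.card_le_one.mpr
    intro i hi j hj
    simp only [Finset.mem_filter] at hi hj
    by_contra hne
    exact hindep _ hi.2 _ hj.2 (hadj i j hne)
  · intro w anchor hinj hanchor hpath hnonadj hclosed hclosed0
    have h34 : w 3 ∈ S ∨ w 4 ∈ S := by
      by_cases h4 : w 4 ∈ S
      · exact Or.inr h4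
      · obtain ⟨y, hyS, hadj⟩ := hmaximal (w 4) h4
        obtain ⟨j, rfl⟩ := hclosed 4 (by decide) y hadj
        fin_cases j
        · exact absurd hadj.symm (hnonadj 0 4 (by decide))
        · exact absurd hadj.symm (hnonadj 1 4 (by decide))
        · exact absurd hadj.symm (hnonadj 2 4 (by decide))
        · exact Or.inl hyS
        · exact absurd hadj (G.irrefl)
    have h012 : w 0 ∈ S ∨ w 1 ∈ S ∨ w 2 ∈ S := by
      by_cases h1 : w 1 ∈ S
      · exact Or.inr (Or.inl h1)
      · obtain ⟨y, hyS, hadj⟩ := hmaximal (w 1) h1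
        obtain ⟨j, rfl⟩ := hclosed 1 (by decide) y hadj
        fin_cases j
        · exact Or.inl hyS
        · exact absurd hadj (G.irrefl)
        · exact Or.inr (Or.inr hyS)
        · exact absurd hadj (hnonadj 1 3 (by decide))
        · exact absurd hadj (hnonadj 1 4 (by decide))
    apply Finset.one_lt_card.mpr
    rcases h012 with h | h | h <;> rcases h34 with h' | h'
    · exact ⟨0, by simp [h], 3, by simp [h'], by decide⟩
    · exact ⟨0, by simp [h], 4, by simp [h'], by decide⟩
    · exact ⟨1, by simp [h], 3, by simp [h'], by decide⟩
    · exact ⟨1, by simp [h], 4, by simp [h'], by decide⟩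
    · exact ⟨2, by simp [h], 3, by simp [h'], by decide⟩
    · exact ⟨2, by simp [h], 4, by simp [h'], by decide⟩
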